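/- Let $R$ be a root system in $(V, \langle\cdot,\cdot\rangle)$ and $\tau$ a Dynkin graph automorphism of $R$ (i.e., an automorphism with $\langle \tau(\alpha), \alpha \rangle = 0$ whenever $\tau(\alpha) \neq \alpha$). Then for any $\alpha \in R$, the reflection in $V^{\tau}$ associated to $\alpha_O = \sum_{\alpha' \in O(\alpha)} \alpha'$ satisfies $s_{\alpha_O} = \prod_{\alpha' \in O(\alpha)} s_{\alpha'}$ as maps on $V^{\tau}$, where the product is over the distinct elements of the $\tau$-orbit $O(\alpha)$ of $\alpha$. -/

import Mathlib

/-- The `τ`-orbit of `α` inside the finite root set `R`. -/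
noncomputable def tauOrbit {V : Type*} [NormedAddCommGroup V] [InnerProductSpace ℝ V]
    (R : Finset V) (τ : V ≃ₗ[ℝ] V) (α : V) : Finset V := by
  classical exact R.filter (fun β => ∃ k : ℕ, (τ ^ k) α = β)

/-- The orbit sum `α_O = ∑_{α' ∈ O(α)} α'`. -/
noncomputable def orbitSum {V : Type*} [NormedAddCommGroup V] [InnerProductSpace ℝ V]
    (R : Finset V) (τ : V ≃ₗ[ℝ] V) (α : V) : V :=
  ∑ β ∈ tauOrbit R τ α, β

/-- The orthogonal reflection in the hyperplane orthogonal to `β`. -/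
noncomputable def reflIn {V : Type*} [NormedAddCommGroup V] [InnerProductSpace ℝ V]
    (β : V) : V → V :=
  fun v => v - ((2 * inner ℝ v β / inner ℝ β β : ℝ)) • β

lemma inner_list_sum_aux {V : Type*} [NormedAddCommGroup V] [InnerProductSpace ℝ V]
    (L : List V) (β : V) :
    (inner ℝ L.sum β : ℝ) = (L.map (fun x => (inner ℝ x β : ℝ))).sum := by
  induction L with
  | nil => simp
  | cons x L ih => simp [inner_add_left, ih]

/-- Folding commuting (orthogonal) reflections over a list. -/
lemma foldr_reflIn {V : Type*} [NormedAddCommGroup V] [InnerProductSpace ℝ V]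
    (L : List V) (hL : L.Pairwise (fun β γ => (inner ℝ β γ : ℝ) = 0)) (v : V) :
    (L.map reflIn).foldr (fun F G => F ∘ G) id v =
      v - (L.map (fun β => ((2 * inner ℝ v β / inner ℝ β β : ℝ)) • β)).sum := by
  induction L with
  | nil => simp
  | cons β L ih =>
    obtain ⟨hβ, hL'⟩ := List.pairwise_cons.mp hL
    simp only [List.map_cons, List.foldr_cons, Function.comp_apply, List.sum_cons]
    rw [ih hL']
    show (v - _) - _ • β = _
    have hTβ : (inner ℝ ((L.map (fun γ => ((2 * inner ℝ v γ / inner ℝ γ γ : ℝ)) • γ)).sum) β : ℝ)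
        = 0 := by
      rw [inner_list_sum_aux, List.map_map]
      apply List.sum_eq_zero
      intro x hx
      simp only [List.mem_map, Function.comp] at hx
      obtain ⟨γ, hγ, rfl⟩ := hx
      have : (inner ℝ γ β : ℝ) = 0 := real_inner_comm β γ ▸ hβ γ hγ
      rw [real_inner_smul_left, this, mul_zero]
    rw [inner_sub_left, hTβ, sub_zero]
    abel

/-- Let `τ` be a Dynkin graph automorphism of a root system `R`
(so that the roots in an orbit `O(α)` are pairwise orthogonal). On the fixed subspace
`V^τ`, the reflection `s_{α_O}` associated to the orbit sum `α_O` preserves `V^τ` and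
equals the product `∏_{α' ∈ O(α)} s_{α'}` of the (commuting) reflections in the
members of the orbit. -/
theorem stmt_7 {V : Type*} [NormedAddCommGroup V] [InnerProductSpace ℝ V]
    (R : Finset V)
    (hspan : Submodule.span ℝ (R : Set V) = ⊤)
    (h0 : (0 : V) ∉ R)
    (hrefl : ∀ α ∈ R, ∀ β ∈ R,
      β - ((2 * inner ℝ β α / inner ℝ α α : ℝ)) • α ∈ R)
    (hint : ∀ α ∈ R, ∀ β ∈ R, ∃ n : ℤ, (2 * inner ℝ β α / inner ℝ α α : ℝ) = (n : ℝ))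
    (τ : V ≃ₗ[ℝ] V)
    (hiso : ∀ v w : V, (inner ℝ (τ v) (τ w) : ℝ) = inner ℝ v w)
    (hτR : ∀ α ∈ R, τ α ∈ R)
    (m : ℕ) (hm : 0 < m) (hord : τ ^ m = 1)
    (hdynkin : ∀ α ∈ R, τ α ≠ α → (inner ℝ (τ α) α : ℝ) = 0)
    (α : V) (hα : α ∈ R)
    -- the members of the orbit are pairwise orthogonal:
    (horth : ∀ β ∈ tauOrbit R τ α, ∀ γ ∈ tauOrbit R τ α, β ≠ γ →
      (inner ℝ β γ : ℝ) = 0) :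
    ∀ v : V, τ v = v →
      (reflIn (orbitSum R τ α) v =
        ((tauOrbit R τ α).toList.map reflIn).foldr (fun F G => F ∘ G) id v) ∧
      τ (reflIn (orbitSum R τ α) v) = reflIn (orbitSum R τ α) v := by
  classical
  intro v hv
  set O := tauOrbit R τ α with hO
  set S := orbitSum R τ α with hS
  -- basic membership facts
  have hOmem : ∀ β, β ∈ O ↔ β ∈ R ∧ ∃ k : ℕ, (τ ^ k) α = β := by
    intro β; simp [hO, tauOrbit]
  have hαO : α ∈ O := (hOmem α).mpr ⟨hα, 0, by simp⟩
  -- powers of τ fix v and preserve inner ℝ products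
  have hfix : ∀ k : ℕ, (τ ^ k) v = v := by
    intro k
    induction k with
    | zero => simp
    | succ k ih =>
      rw [LinearEquiv.pow_apply, Function.iterate_succ_apply', ← LinearEquiv.pow_apply, ih, hv]
  have hisok : ∀ (k : ℕ) (x y : V), (inner ℝ ((τ ^ k) x) ((τ ^ k) y) : ℝ) = inner ℝ x y := by
    intro k x y
    induction k with
    | zero => simp
    | succ k ih =>
      rw [LinearEquiv.pow_apply, LinearEquiv.pow_apply, Function.iterate_succ_apply',
        Function.iterate_succ_apply', ← LinearEquiv.pow_apply, ← LinearEquiv.pow_apply, hiso, ih]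
  -- inner ℝ products along the orbit
  have hc : ∀ β ∈ O, (inner ℝ v β : ℝ) = inner ℝ v α := by
    intro β hβ
    obtain ⟨-, k, rfl⟩ := (hOmem β).mp hβ
    rw [← hfix k, hisok, hfix]
  have hn : ∀ β ∈ O, (inner ℝ β β : ℝ) = inner ℝ α α := by
    intro β hβ
    obtain ⟨-, k, rfl⟩ := (hOmem β).mp hβ
    rw [hisok]
  have hα0 : α ≠ 0 := fun h => h0 (h ▸ hα)
  have hnn : (inner ℝ α α : ℝ) ≠ 0 := fun h => hα0 (inner_self_eq_zero.mp h)
  have hcard : (0 : ℝ) < (O.card : ℝ) := by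
    exact_mod_cast Finset.card_pos.mpr ⟨α, hαO⟩
  -- τ preserves the orbit, hence the orbit sum
  have himg : O.image τ = O := by
    apply Finset.eq_of_subset_of_card_le
    · intro β hβ
      obtain ⟨γ, hγ, rfl⟩ := Finset.mem_image.mp hβ
      obtain ⟨hγR, k, rfl⟩ := (hOmem γ).mp hγ
      refine (hOmem _).mpr ⟨hτR _ hγR, k + 1, ?_⟩
      rw [LinearEquiv.pow_apply, Function.iterate_succ_apply', ← LinearEquiv.pow_apply]
    · rw [Finset.card_image_of_injective _ τ.injective]
  have hτS : τ S = S := by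
    have : τ S = ∑ β ∈ O, τ β := by
      simp [hS, orbitSum, ← hO, map_sum]
    have h2 : ∑ β ∈ O.image τ, β = ∑ β ∈ O, τ β :=
      Finset.sum_image (fun x _ y _ h => τ.injective h)
    rw [this, ← h2, himg]
    rfl
  -- inner ℝ products with the orbit sum
  have hSdef : S = ∑ β ∈ O, β := rfl
  have hvS : (inner ℝ v S : ℝ) = (O.card : ℝ) * inner ℝ v α := by
    rw [hSdef, inner_sum]
    rw [Finset.sum_congr rfl hc, Finset.sum_const, nsmul_eq_mul]
  have hSS : (inner ℝ S S : ℝ) = (O.card : ℝ) * inner ℝ α α := by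
    rw [hSdef, sum_inner]
    have : ∀ β ∈ O, (inner ℝ β (∑ γ ∈ O, γ) : ℝ) = inner ℝ α α := by
      intro β hβ
      rw [inner_sum]
      rw [Finset.sum_eq_single β (fun γ hγ hne => horth β hβ γ hγ (Ne.symm hne))
        (fun h => absurd hβ h)]
      exact hn β hβ
    rw [Finset.sum_congr rfl this, Finset.sum_const, nsmul_eq_mul]
  -- the reflection in the orbit sum, computed
  have hcoef : (2 * inner ℝ v S / inner ℝ S S : ℝ) = 2 * inner ℝ v α / inner ℝ α α := by
    rw [hvS, hSS]
    rw [mul_comm (2 : ℝ), mul_assoc, mul_div_mul_left _ _ (ne_of_gt hcard), mul_comm]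
  have hmain : reflIn S v = v - ∑ β ∈ O, ((2 * inner ℝ v β / inner ℝ β β : ℝ)) • β := by
    unfold reflIn
    rw [hcoef, hSdef, Finset.smul_sum]
    congr 1
    apply Finset.sum_congr rfl
    intro β hβ
    rw [hc β hβ, hn β hβ]
  constructor
  · -- agreement with the product of reflections
    have hpw : O.toList.Pairwise (fun β γ => (inner ℝ β γ : ℝ) = 0) := by
      refine List.Pairwise.imp_of_mem ?_ (O.nodup_toList)
      intro β γ hβ hγ hne
      exact horth β (Finset.mem_toList.mp hβ) γ (Finset.mem_toList.mp hγ) hne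
    rw [foldr_reflIn _ hpw, hmain]
    congr 1
    rw [← Finset.sum_map_toList]
  · -- τ fixes the reflected vector
    unfold reflIn
    rw [map_sub, map_smul, hv, hτS]
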